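/- Let ν ∈ ℳ(𝒳×𝒳*) with ν ≪ ν_1⊗ℚ. With ν_k the normalized restriction of ν to 𝒳×𝒳_k*, ℚ_k the conditional kernel ℚ_k{c|a} = ℚ{c|a}/ℚ{𝒳_k*|a} for c∈𝒳_k*, and f_k(a,c) = 1_{ν_k(a,c)>0} log( ν_k(a,c) / ((ν_k)_1⊗ℚ_k)(a,c) ), f^{(0,q]}(a,c) = 1_{ν_1⊗ℚ(a,c) ≥ ν(a,c) > 0} log( ν(a,c)/(ν_1⊗ℚ)(a,c) ), f^{(q,1]}(a,c) = 1_{1 ≥ ν(a,c) > ν_1⊗ℚ(a,c)} log( ν(a,c)/(ν_1⊗ℚ)(a,c) ), the following hold: (i) limsup_{k→∞} ⟨f^{(0,q]}, ν_k⟩ ≤ ⟨f^{(0,q]}, ν⟩; (ii) limsup_{k→∞} ⟨f_k, ν_k⟩ ≤ ⟨f^{(0,q]}, ν⟩ + ⟨f^{(q,1]}, ν⟩. -/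

import Mathlib

open scoped ENNReal NNReal Classical
open Filter

namespace GWLD

/-! ### The space `𝒳* = ⋃ₙ {n} × 𝒳ⁿ` of offspring configurations -/

/-- `𝒳* = ⋃ₙ {n} × 𝒳ⁿ`, with the discrete topology (it is a countable type). -/
abbrev XStar (𝒳 : Type) : Type := Σ n : ℕ, Fin n → 𝒳

/-- the multiplicity `m(b,c)` of the symbol `b` in `c = (n, a₁, …, aₙ)`. -/
noncomputable def mult {𝒳 : Type} (b : 𝒳) (c : XStar 𝒳) : ℕ :=
  (Finset.univ.filter fun i : Fin c.1 => c.2 i = b).card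

/-! ### Finite rooted planar typed trees -/

/-- A finite rooted planar tree, each vertex carrying a type from `𝒳`. -/
inductive TypedTree (𝒳 : Type) where
  | node : 𝒳 → List (TypedTree 𝒳) → TypedTree 𝒳

namespace TypedTree

variable {𝒳 : Type}

/-- the type of the root. -/
def rootType : TypedTree 𝒳 → 𝒳
  | node a _ => a

mutual
  /-- the number `|T|` of vertices of the tree. -/
  def size : TypedTree 𝒳 → ℕ
    | node _ ts => 1 + sizeList ts
  def sizeList : List (TypedTree 𝒳) → ℕ
    | [] => 0
    | t :: ts => size t + sizeList ts
end

/-- the element of `𝒳*` recording the number and types of the roots of a list of trees;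
`spec ts = C(v)` when `ts` is the list of subtrees hanging off the vertex `v`. -/
def spec (ts : List (TypedTree 𝒳)) : XStar 𝒳 :=
  ⟨ts.length, fun i => rootType (ts.get i)⟩

mutual
  /-- `offCount t (a,c) = #{v ∈ V : (X(v), C(v)) = (a,c)}`. -/
  noncomputable def offCount : TypedTree 𝒳 → 𝒳 × XStar 𝒳 → ℕ
    | node a ts, p => (if p = (a, spec ts) then 1 else 0) + offCountList ts p
  noncomputable def offCountList : List (TypedTree 𝒳) → 𝒳 × XStar 𝒳 → ℕ
    | [], _ => 0
    | t :: ts, p => offCount t p + offCountList ts p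
end

mutual
  /-- `pairCount t (a,b) = #{e ∈ E : (X(e₁), X(e₂)) = (a,b)}`. -/
  noncomputable def pairCount : TypedTree 𝒳 → 𝒳 × 𝒳 → ℕ
    | node a ts, p =>
        (ts.map fun s => if p = (a, rootType s) then 1 else 0).sum + pairCountList ts p
  noncomputable def pairCountList : List (TypedTree 𝒳) → 𝒳 × 𝒳 → ℕ
    | [], _ => 0
    | t :: ts, p => pairCount t p + pairCountList ts p
end

mutual
  /-- `∏_{v ∈ V} ℚ{C(v) | X(v)}`. -/
  noncomputable def treeWeight (Q : 𝒳 → XStar 𝒳 → ℝ) : TypedTree 𝒳 → ℝ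
    | node a ts => Q a (spec ts) * treeWeightList Q ts
  noncomputable def treeWeightList (Q : 𝒳 → XStar 𝒳 → ℝ) : List (TypedTree 𝒳) → ℝ
    | [] => 1
    | t :: ts => treeWeight Q t * treeWeightList Q ts
end

end TypedTree

open TypedTree

variable {𝒳 : Type}

/-! ### Empirical measures -/

/-- the empirical offspring measure `M_X`. -/
noncomputable def MX (t : TypedTree 𝒳) : 𝒳 × XStar 𝒳 → ℝ :=
  fun p => (offCount t p : ℝ) / (size t : ℝ)

/-- the empirical pair measure `L̃_X` (normalised by the number of vertices). -/
noncomputable def LtX (t : TypedTree 𝒳) : 𝒳 × 𝒳 → ℝ :=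
  fun p => (pairCount t p : ℝ) / (size t : ℝ)

/-- the empirical pair measure `L_X` (normalised by the number `|T| - 1` of edges). -/
noncomputable def LX (t : TypedTree 𝒳) : 𝒳 × 𝒳 → ℝ :=
  fun p => (pairCount t p : ℝ) / ((size t : ℝ) - 1)

/-! ### The law of a multitype Galton-Watson tree and conditioning on the total size -/

/-- the probability that the multitype Galton-Watson tree with initial law `μ` and
offspring kernel `Q` produces exactly the typed tree `t`. -/
noncomputable def gwLaw (μ : 𝒳 → ℝ) (Q : 𝒳 → XStar 𝒳 → ℝ) (t : TypedTree 𝒳) : ℝ :=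
  μ (rootType t) * treeWeight Q t

/-- `P{|T| = n}`. -/
noncomputable def partSum (μ : 𝒳 → ℝ) (Q : 𝒳 → XStar 𝒳 → ℝ) (n : ℕ) : ℝ :=
  ∑' t : TypedTree 𝒳, if size t = n then gwLaw μ Q t else 0

/-- `P{X ∈ A | |T| = n}`. -/
noncomputable def condProb (μ : 𝒳 → ℝ) (Q : 𝒳 → XStar 𝒳 → ℝ)
    (A : Set (TypedTree 𝒳)) (n : ℕ) : ℝ :=
  (∑' t : TypedTree 𝒳, if size t = n ∧ t ∈ A then gwLaw μ Q t else 0) / partSum μ Q n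

/-- `n → ∞` along those `n` for which `P{|T| = n} > 0`. -/
noncomputable def condFilter (μ : 𝒳 → ℝ) (Q : 𝒳 → XStar 𝒳 → ℝ) : Filter ℕ :=
  Filter.atTop ⊓ Filter.principal {n : ℕ | 0 < partSum μ Q n}

/-! ### Large deviation principles -/

/-- extended logarithm, `elog x = -∞` for `x ≤ 0`. -/
noncomputable def elog (x : ℝ) : EReal := if x ≤ 0 then (⊥ : EReal) else ((Real.log x : ℝ) : EReal)

/-- A family `P n` of (conditional) probabilities on a topological space `S` satisfies a
large deviation principle with speed `n`, along the filter `L`, with rate function `I`. -/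
def HasLDP {S : Type*} [TopologicalSpace S] (P : ℕ → Set S → ℝ) (L : Filter ℕ)
    (I : S → ℝ≥0∞) : Prop :=
  (∀ F : Set S, IsClosed F →
      Filter.limsup (fun n : ℕ => (((n : ℝ)⁻¹ : ℝ) : EReal) * elog (P n F)) L
        ≤ -(⨅ x ∈ F, (I x : EReal))) ∧
  (∀ G : Set S, IsOpen G →
      -(⨅ x ∈ G, (I x : EReal))
        ≤ Filter.liminf (fun n : ℕ => (((n : ℝ)⁻¹ : ℝ) : EReal) * elog (P n G)) L)

/-- a good rate function: lower semicontinuous with compact sublevel sets. -/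
def IsGoodRate {S : Type*} [TopologicalSpace S] (I : S → ℝ≥0∞) : Prop :=
  LowerSemicontinuous I ∧ ∀ c : ℝ≥0∞, c ≠ ⊤ → IsCompact {x : S | I x ≤ c}

/-! ### Relative entropy -/

/-- relative entropy `H(ν ‖ μ)` of two (probability) mass functions on a countable set,
written via `φ(x) = x log x - x + 1` so that all summands are nonnegative. -/
noncomputable def relEnt {α : Type*} (ν μ : α → ℝ) : ℝ≥0∞ :=
  if ∀ x, μ x = 0 → ν x = 0 then
    ∑' x, ENNReal.ofReal (ν x * Real.log (ν x / μ x) - ν x + μ x)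
  else ⊤

/-! ### Probability vectors and offspring kernels -/

/-- a probability mass function. -/
def IsProbVec {α : Type*} (μ : α → ℝ) : Prop := (∀ a, 0 ≤ μ a) ∧ HasSum μ 1

/-- an offspring transition kernel from `𝒳` to `𝒳*`. -/
def IsKernel (Q : 𝒳 → XStar 𝒳 → ℝ) : Prop :=
  (∀ a c, 0 ≤ Q a c) ∧ ∀ a, HasSum (Q a) 1

/-- the offspring numbers have finite second moment under `Q{·|a}` for every `a`. -/
def FiniteSecondMoment (Q : 𝒳 → XStar 𝒳 → ℝ) : Prop :=
  ∀ a, Summable fun c : XStar 𝒳 => ((c.1 : ℝ)) ^ 2 * Q a c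

/-! ### The mean matrix, weak irreducibility and criticality -/

/-- the mean matrix `A(a,b) = Σ_c ℚ{c|b} m(a,c)`, valued in `[0,∞]`. -/
noncomputable def AmatE [Fintype 𝒳] (Q : 𝒳 → XStar 𝒳 → ℝ) : Matrix 𝒳 𝒳 ℝ≥0∞ :=
  Matrix.of fun a b => ∑' c : XStar 𝒳, (mult a c : ℝ≥0∞) * ENNReal.ofReal (Q b c)

/-- `A*(a,b) = Σ_{k ≥ 1} A^k(a,b) ∈ [0,∞]`. -/
noncomputable def Astar [Fintype 𝒳] [DecidableEq 𝒳] (Q : 𝒳 → XStar 𝒳 → ℝ) (a b : 𝒳) : ℝ≥0∞ :=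
  ∑' k : ℕ, (AmatE Q ^ (k + 1)) a b

/-- the multitype Galton-Watson tree with offspring kernel `Q` is weakly irreducible:
`𝒳` splits into recurrent and transient states as prescribed, and the number of
transient offspring is uniformly bounded under `Q`. -/
def WeaklyIrreducibleGW [Fintype 𝒳] [DecidableEq 𝒳] (Q : 𝒳 → XStar 𝒳 → ℝ) : Prop :=
  ∃ Xr Xt : Set 𝒳, Xr.Nonempty ∧ Disjoint Xr Xt ∧ Xr ∪ Xt = Set.univ ∧
    (∀ a b, b ∈ Xr → 0 < Astar Q a b) ∧
    (∀ a b, b ∈ Xt → (a = b ∨ a ∈ Xr) → Astar Q a b = 0) ∧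
    ∃ C : ℕ, ∀ a c, Q a c ≠ 0 → (∑ b : 𝒳, if b ∈ Xt then mult b c else 0) ≤ C

/-- the mean matrix as a real matrix (meaningful when the entries are finite). -/
noncomputable def Amat [Fintype 𝒳] (Q : 𝒳 → XStar 𝒳 → ℝ) : Matrix 𝒳 𝒳 ℝ :=
  Matrix.of fun a b => ∑' c : XStar 𝒳, (mult a c : ℝ) * Q b c

/-- `r` is the Perron-Frobenius eigenvalue of the nonnegative matrix `M` : it is an
eigenvalue with a nonnegative eigenvector dominating the modulus of every eigenvalue. -/
def IsPerronRoot [Fintype 𝒳] [DecidableEq 𝒳] (M : Matrix 𝒳 𝒳 ℝ) (r : ℝ) : Prop :=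
  (∃ v : 𝒳 → ℝ, v ≠ 0 ∧ (∀ a, 0 ≤ v a) ∧ M.mulVec v = r • v) ∧
  ∀ z : ℂ, (M.map (algebraMap ℝ ℂ)).charpoly.IsRoot z → ‖z‖ ≤ r

/-- criticality: the Perron-Frobenius eigenvalue of the mean matrix is `1`. -/
def CriticalGW [Fintype 𝒳] [DecidableEq 𝒳] (Q : 𝒳 → XStar 𝒳 → ℝ) : Prop :=
  IsPerronRoot (Amat Q) 1

/-! ### Spaces of measures (weak topology = topology of pointwise convergence) -/

/-- `ℳ̃(𝒳×𝒳)`: finite (nonnegative) measures on `𝒳 × 𝒳`. -/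
def Mpair (𝒳 : Type) : Set ((𝒳 × 𝒳) → ℝ) := {ϖ | ∀ p, 0 ≤ ϖ p}

/-- `ℳ(𝒳×𝒳*)`: probability measures `ν` on `𝒳 × 𝒳*` with `∫ n dν < ∞`. -/
def Mstar (𝒳 : Type) : Set ((𝒳 × XStar 𝒳) → ℝ) :=
  {ν | (∀ p, 0 ≤ ν p) ∧ HasSum ν 1 ∧ Summable fun p : 𝒳 × XStar 𝒳 => (p.2.1 : ℝ) * ν p}

/-- `ℳ(𝒳×𝒳_k*)`: probability measures on `𝒳 × 𝒳*` carried by `𝒳 × 𝒳_k*`. -/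
def MstarK (𝒳 : Type) (k : ℕ) : Set ((𝒳 × XStar 𝒳) → ℝ) :=
  {ν | ν ∈ Mstar 𝒳 ∧ ∀ p : 𝒳 × XStar 𝒳, k < p.2.1 → ν p = 0}

/-- `ℳ(𝒳×𝒳)` as probability measures: the empirical pair measure lives here. -/
def Mprob2 (𝒳 : Type) [Fintype 𝒳] : Set ((𝒳 × 𝒳) → ℝ) :=
  {μ | (∀ p, 0 ≤ μ p) ∧ ∑ p : 𝒳 × 𝒳, μ p = 1}

/-- the `𝒳`-marginal `ν₁` of a measure on `𝒳 × 𝒳*`. -/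
noncomputable def nu1 (ν : (𝒳 × XStar 𝒳) → ℝ) : 𝒳 → ℝ := fun a => ∑' c : XStar 𝒳, ν (a, c)

/-- the second marginal `ϖ₂` of a measure on `𝒳 × 𝒳`. -/
noncomputable def pi2 [Fintype 𝒳] (ϖ : (𝒳 × 𝒳) → ℝ) : 𝒳 → ℝ := fun b => ∑ a : 𝒳, ϖ (a, b)

/-- `(ϖ, ν)` is sub-consistent: `ϖ(a,b) ≥ Σ_c m(b,c) ν(a,c)` for all `a, b`. -/
def SubConsistent (ϖ : (𝒳 × 𝒳) → ℝ) (ν : (𝒳 × XStar 𝒳) → ℝ) : Prop :=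
  ∀ a b : 𝒳, (∑' c : XStar 𝒳, (mult b c : ℝ) * ν (a, c)) ≤ ϖ (a, b)

/-- `(ϖ, ν)` is consistent: `ϖ(a,b) = Σ_c m(b,c) ν(a,c)` for all `a, b`. -/
def Consistent (ϖ : (𝒳 × 𝒳) → ℝ) (ν : (𝒳 × XStar 𝒳) → ℝ) : Prop :=
  ∀ a b : 𝒳, (∑' c : XStar 𝒳, (mult b c : ℝ) * ν (a, c)) = ϖ (a, b)

/-- the measure `ν₁ ⊗ ℚ (a,c) = ν₁(a) ℚ{c|a}` on `𝒳 × 𝒳*`. -/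
noncomputable def prodQ (ν1f : 𝒳 → ℝ) (Q : 𝒳 → XStar 𝒳 → ℝ) : (𝒳 × XStar 𝒳) → ℝ :=
  fun p => ν1f p.1 * Q p.1 p.2

/-! ### The rate functions -/

/-- the rate function `J` of Theorem 2.1. -/
noncomputable def Jrate [Fintype 𝒳] (Q : 𝒳 → XStar 𝒳 → ℝ)
    (ϖ : (𝒳 × 𝒳) → ℝ) (ν : (𝒳 × XStar 𝒳) → ℝ) : ℝ≥0∞ :=
  if SubConsistent ϖ ν ∧ pi2 ϖ = nu1 ν then relEnt ν (prodQ (nu1 ν) Q) else ⊤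

/-- the rate function `J_k` of Theorem 2.3 (consistency instead of sub-consistency). -/
noncomputable def JrateC [Fintype 𝒳] (Q : 𝒳 → XStar 𝒳 → ℝ)
    (ϖ : (𝒳 × 𝒳) → ℝ) (ν : (𝒳 × XStar 𝒳) → ℝ) : ℝ≥0∞ :=
  if Consistent ϖ ν ∧ pi2 ϖ = nu1 ν then relEnt ν (prodQ (nu1 ν) Q) else ⊤

/-- the rate function `K` of Corollary 2.2. -/
noncomputable def Krate (Q : 𝒳 → XStar 𝒳 → ℝ) (ν : (𝒳 × XStar 𝒳) → ℝ) : ℝ≥0∞ :=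
  if ∀ b : 𝒳, (∑' p : 𝒳 × XStar 𝒳, (mult b p.2 : ℝ) * ν p) ≤ nu1 ν b then
    relEnt ν (prodQ (nu1 ν) Q)
  else ⊤

/-- the rate function `J̃`, defined on sub-consistent pairs. -/
noncomputable def Jtilde [Fintype 𝒳] (Q : 𝒳 → XStar 𝒳 → ℝ)
    (ϖ : (𝒳 × 𝒳) → ℝ) (ν : (𝒳 × XStar 𝒳) → ℝ) : ℝ≥0∞ :=
  if pi2 ϖ = nu1 ν then relEnt ν (prodQ (nu1 ν) Q) else ⊤

/-! ### Events -/

/-- the event `{(L̃_X, M_X) ∈ F}` for `F` a set of pairs of measures. -/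
def evPairOff (F : Set (↥(Mpair 𝒳) × ↥(Mstar 𝒳))) : Set (TypedTree 𝒳) :=
  {t | ∃ x ∈ F, x.1.1 = LtX t ∧ x.2.1 = MX t}

/-- the event `{(L̃_X, M_X) ∈ F}` for `F` a set of pairs with second component in `ℳ(𝒳×𝒳_k*)`. -/
def evPairOffK (k : ℕ) (F : Set (↥(Mpair 𝒳) × ↥(MstarK 𝒳 k))) : Set (TypedTree 𝒳) :=
  {t | ∃ x ∈ F, x.1.1 = LtX t ∧ x.2.1 = MX t}

/-- the event `{M_X ∈ F}`. -/
def evOff (F : Set ↥(Mstar 𝒳)) : Set (TypedTree 𝒳) := {t | ∃ x ∈ F, x.1 = MX t}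

/-- the event `{L_X ∈ F}`. -/
def evPair [Fintype 𝒳] (F : Set ↥(Mprob2 𝒳)) : Set (TypedTree 𝒳) := {t | ∃ x ∈ F, x.1 = LX t}

/-- `ℳ_s`, the (closed) set of sub-consistent pairs, as a subspace. -/
def Msub (𝒳 : Type) : Set (↥(Mpair 𝒳) × ↥(Mstar 𝒳)) := {x | SubConsistent x.1.1 x.2.1}

/-- `ℳ_{c,k}`, the (closed) set of consistent pairs, as a subspace. -/
def MsubK (𝒳 : Type) (k : ℕ) : Set (↥(Mpair 𝒳) × ↥(MstarK 𝒳 k)) := {x | Consistent x.1.1 x.2.1}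

/-- the event `{(L̃_X, M_X) ∈ F}` for `F ⊆ ℳ_s`. -/
def evPairOffSub (F : Set ↥(Msub 𝒳)) : Set (TypedTree 𝒳) :=
  {t | ∃ x ∈ F, x.1.1.1 = LtX t ∧ x.1.2.1 = MX t}

/-- the event `{(L̃_X, M_X) ∈ F}` for `F ⊆ ℳ_{c,k}`. -/
def evPairOffSubK (k : ℕ) (F : Set ↥(MsubK 𝒳 k)) : Set (TypedTree 𝒳) :=
  {t | ∃ x ∈ F, x.1.1.1 = LtX t ∧ x.1.2.1 = MX t}

/-! ### Markov chains indexed by Galton-Watson trees -/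

/-- the offspring kernel of a Markov chain with transition kernel `Q` indexed by a
Galton-Watson tree with offspring law `p`: `ℚ{c|b} = p(n) ∏ᵢ Q{aᵢ|b}`. -/
noncomputable def mcKernel (p : ℕ → ℝ) (Q : 𝒳 → 𝒳 → ℝ) : 𝒳 → XStar 𝒳 → ℝ :=
  fun b c => p c.1 * ∏ i : Fin c.1, Q b (c.2 i)

/-- irreducibility of a Markovian transition kernel on `𝒳`. -/
def IrreducibleKernel [Fintype 𝒳] [DecidableEq 𝒳] (Q : 𝒳 → 𝒳 → ℝ) : Prop :=
  ∀ a b : 𝒳, ∃ n : ℕ, 0 < ((Matrix.of Q) ^ (n + 1)) a b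

/-- first marginal of a measure on `𝒳 × 𝒳`. -/
noncomputable def mu1m [Fintype 𝒳] (μ : (𝒳 × 𝒳) → ℝ) : 𝒳 → ℝ := fun a => ∑ b : 𝒳, μ (a, b)

/-- second marginal of a measure on `𝒳 × 𝒳`. -/
noncomputable def mu2m [Fintype 𝒳] (μ : (𝒳 × 𝒳) → ℝ) : 𝒳 → ℝ := fun b => ∑ a : 𝒳, μ (a, b)

/-- the Cramér transform `I_p(x) = sup_λ {λx - log Σₙ p(n) e^{λn}}` of an offspring law,
as an element of `[0,∞]` (the log-moment generating function being `+∞`,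
i.e. the bracket being `-∞`, where the series diverges). -/
noncomputable def Ip (p : ℕ → ℝ) (x : ℝ) : ℝ≥0∞ :=
  ⨆ lam : ℝ,
    if Summable (fun n : ℕ => p n * Real.exp (lam * n)) then
      ENNReal.ofReal (lam * x - Real.log (∑' n : ℕ, p n * Real.exp (lam * n)))
    else 0

/-- the log-moment generating function `Λ_p(λ)`, valued in `(-∞, ∞]`. -/
noncomputable def logMgf (p : ℕ → ℝ) (lam : ℝ) : EReal :=
  if Summable (fun n : ℕ => p n * Real.exp (lam * n)) then
    ((Real.log (∑' n : ℕ, p n * Real.exp (lam * n)) : ℝ) : EReal)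
  else ⊤

/-- the rate function `I` of Theorem 2.5. -/
noncomputable def Irate [Fintype 𝒳] (p : ℕ → ℝ) (Q : 𝒳 → 𝒳 → ℝ) (μ : (𝒳 × 𝒳) → ℝ) : ℝ≥0∞ :=
  if ∀ a : 𝒳, mu2m μ a = 0 → mu1m μ a = 0 then
    relEnt μ (fun q : 𝒳 × 𝒳 => mu1m μ q.1 * Q q.1 q.2)
      + ∑ a : 𝒳, ENNReal.ofReal (mu2m μ a) * Ip p (mu1m μ a / mu2m μ a)
  else ⊤

/-! ### The variational upper-bound functional `Ĵ` -/

/-- bounded functions on `𝒳 × 𝒳*`. -/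
def BddFun {α : Type*} (g : α → ℝ) : Prop := ∃ M : ℝ, ∀ x, |g x| ≤ M

/-- `U_g(a) = log Σ_c e^{g(a,c)} ℚ{c|a}`. -/
noncomputable def Ug (Q : 𝒳 → XStar 𝒳 → ℝ) (g : (𝒳 × XStar 𝒳) → ℝ) (a : 𝒳) : ℝ :=
  Real.log (∑' c : XStar 𝒳, Real.exp (g (a, c)) * Q a c)

/-- `Ĵ(ϖ,ν) = sup_{g bounded} { ∫ g dν - ∫ U_g(b) ϖ(da,db) }`. -/
noncomputable def Jhat [Fintype 𝒳] (Q : 𝒳 → XStar 𝒳 → ℝ)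
    (ϖ : (𝒳 × 𝒳) → ℝ) (ν : (𝒳 × XStar 𝒳) → ℝ) : ℝ≥0∞ :=
  ⨆ (g : (𝒳 × XStar 𝒳) → ℝ) (_ : BddFun g),
    ENNReal.ofReal ((∑' p : 𝒳 × XStar 𝒳, g p * ν p) - ∑ q : 𝒳 × 𝒳, Ug Q g q.2 * ϖ q)

/-! ### Truncation, conditional kernels, total variation -/

/-- `‖ν‖_k = ν(𝒳 × 𝒳_k*)`. -/
noncomputable def normK (k : ℕ) (ν : (𝒳 × XStar 𝒳) → ℝ) : ℝ :=
  ∑' p : 𝒳 × XStar 𝒳, if p.2.1 ≤ k then ν p else 0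

/-- `ν_k`, the normalised restriction of `ν` to `𝒳 × 𝒳_k*`. -/
noncomputable def restrictK (k : ℕ) (ν : (𝒳 × XStar 𝒳) → ℝ) : (𝒳 × XStar 𝒳) → ℝ :=
  fun p => if p.2.1 ≤ k then ν p / normK k ν else 0

/-- `ℚ{𝒳_k* | a}`. -/
noncomputable def QmassK (Q : 𝒳 → XStar 𝒳 → ℝ) (k : ℕ) (a : 𝒳) : ℝ :=
  ∑' c : XStar 𝒳, if c.1 ≤ k then Q a c else 0

/-- the conditional offspring kernel `ℚ_k{c|a} = ℚ{c|a} / ℚ{𝒳_k*|a}` on `𝒳_k*`. -/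
noncomputable def Qcond (Q : 𝒳 → XStar 𝒳 → ℝ) (k : ℕ) : 𝒳 → XStar 𝒳 → ℝ :=
  fun a c => if c.1 ≤ k then Q a c / QmassK Q k a else 0

/-- `ϖ_k(a,b) = Σ_{c ∈ 𝒳_k*} m(b,c) ν_k(a,c)`. -/
noncomputable def piK (k : ℕ) (ν : (𝒳 × XStar 𝒳) → ℝ) : (𝒳 × 𝒳) → ℝ :=
  fun q => ∑' c : XStar 𝒳, (mult q.2 c : ℝ) * restrictK k ν (q.1, c)

/-- the total variation metric `d(ν,ν̃) = (1/2) Σ |ν - ν̃|`. -/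
noncomputable def tvDist {α : Type*} (ν ν' : α → ℝ) : ℝ := (1 / 2) * ∑' x, |ν x - ν' x|

/-- the pairing `⟨f, ν⟩ = Σ f dν`, valued in `[-∞,∞]`
(defined as the difference of the positive and negative parts). -/
noncomputable def pairE {α : Type*} (f ν : α → ℝ) : EReal :=
  ((∑' x, ENNReal.ofReal (f x * ν x) : ℝ≥0∞) : EReal)
    - ((∑' x, ENNReal.ofReal (-(f x * ν x)) : ℝ≥0∞) : EReal)

/-- `f^{(0,q]} = 1_{ν₁⊗ℚ ≥ ν > 0} log (ν / ν₁⊗ℚ)`. -/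
noncomputable def f0q (Q : 𝒳 → XStar 𝒳 → ℝ) (ν : (𝒳 × XStar 𝒳) → ℝ) : (𝒳 × XStar 𝒳) → ℝ :=
  fun p => if 0 < ν p ∧ ν p ≤ prodQ (nu1 ν) Q p then Real.log (ν p / prodQ (nu1 ν) Q p) else 0

/-- `f^{(q,1]} = 1_{1 ≥ ν > ν₁⊗ℚ} log (ν / ν₁⊗ℚ)`. -/
noncomputable def fq1 (Q : 𝒳 → XStar 𝒳 → ℝ) (ν : (𝒳 × XStar 𝒳) → ℝ) : (𝒳 × XStar 𝒳) → ℝ :=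
  fun p => if prodQ (nu1 ν) Q p < ν p ∧ ν p ≤ 1 then Real.log (ν p / prodQ (nu1 ν) Q p) else 0

/-- `f_k = 1_{ν_k > 0} log (ν_k / (ν_k)₁⊗ℚ_k)`. -/
noncomputable def fres (Q : 𝒳 → XStar 𝒳 → ℝ) (k : ℕ) (ν : (𝒳 × XStar 𝒳) → ℝ) :
    (𝒳 × XStar 𝒳) → ℝ :=
  fun p => if 0 < restrictK k ν p then
    Real.log (restrictK k ν p / prodQ (nu1 (restrictK k ν)) (Qcond Q k) p) else 0

/-! ### Product laws on `𝒳*` and on `𝒳ⁿ` -/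

/-- the offspring law `q(c) = p(n) ∏ᵢ q̂(aᵢ)` on `𝒳*`. -/
noncomputable def qProd (p : ℕ → ℝ) (qhat : 𝒳 → ℝ) : XStar 𝒳 → ℝ :=
  fun c => p c.1 * ∏ i : Fin c.1, qhat (c.2 i)

/-- the product measure `q̂ⁿ` on `𝒳ⁿ`. -/
noncomputable def prodM (qhat : 𝒳 → ℝ) (n : ℕ) : (Fin n → 𝒳) → ℝ := fun y => ∏ i, qhat (y i)

/-- the `i`-th marginal `v_{n,i}` of a measure on `𝒳ⁿ`. -/
noncomputable def marginal [Fintype 𝒳] {n : ℕ} (v : (Fin n → 𝒳) → ℝ) (i : Fin n) : 𝒳 → ℝ :=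
  fun b => ∑ y : Fin n → 𝒳, if y i = b then v y else 0

/-- the tilted law `s_λ(n) = p(n) e^{λn - Λ_p(λ)}`. -/
noncomputable def tilted (p : ℕ → ℝ) (lam : ℝ) : ℕ → ℝ :=
  fun n => p n * Real.exp (lam * n - Real.log (∑' m : ℕ, p m * Real.exp (lam * m)))

/-- `n × M_X[N > B]`: the number of vertices with more than `B` children. -/
noncomputable def bigCount (t : TypedTree 𝒳) (B : ℕ) : ℝ :=
  ∑' p : 𝒳 × XStar 𝒳, if B < p.2.1 then (TypedTree.offCount t p : ℝ) else 0


open Topology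

lemma aux_finite (𝒳 : Type) [Fintype 𝒳] (k : ℕ) :
    Set.Finite {p : 𝒳 × XStar 𝒳 | p.2.1 ≤ k} := by
  have h1 : Set.Finite {c : XStar 𝒳 | c.1 ≤ k} := by
    have hsub : {c : XStar 𝒳 | c.1 ≤ k} ⊆ ⋃ n ∈ Finset.range (k+1), Set.range (Sigma.mk n) := by
      intro c hc
      simp only [Set.mem_iUnion]
      exact ⟨c.1, by simpa using Nat.lt_succ_of_le hc, c.2, rfl⟩
    exact Set.Finite.subset (Set.Finite.biUnion (Finset.range (k+1)).finite_toSet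
      (fun n _ => Set.finite_range _)) hsub
  exact Set.Finite.subset (Set.finite_univ.prod h1) (fun p hp => ⟨Set.mem_univ _, hp⟩)

lemma aux_tendsto {α : Type*} (ℓ : α → ℕ) {g : α → ℝ} (hg : Summable g) (h0 : ∀ x, 0 ≤ g x) :
    Tendsto (fun k : ℕ => ∑' x, if ℓ x ≤ k then g x else 0) atTop (𝓝 (∑' x, g x)) := by
  have hsk : ∀ k : ℕ, Summable fun x => if ℓ x ≤ k then g x else 0 := fun k =>
    hg.of_nonneg_of_le (fun x => by split <;> simp [h0 x]) (fun x => by split <;> simp [h0 x])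
  have hTle : ∀ k, (∑' x, if ℓ x ≤ k then g x else 0) ≤ ∑' x, g x := fun k =>
    Summable.tsum_le_tsum (fun x => by split <;> simp [h0 x]) (hsk k) hg
  rw [Metric.tendsto_atTop]
  intro ε hε
  obtain ⟨F, hF⟩ := (Metric.tendsto_nhds.mp hg.hasSum ε hε).exists
  refine ⟨F.sup ℓ, fun k hk => ?_⟩
  have h1 : ∑ x ∈ F, g x ≤ ∑' x, if ℓ x ≤ k then g x else 0 := by
    have h2 : ∑ x ∈ F, (if ℓ x ≤ k then g x else 0) ≤ ∑' x, if ℓ x ≤ k then g x else 0 :=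
      Summable.sum_le_tsum F (fun x _ => by split <;> simp [h0 x]) (hsk k)
    refine le_trans (le_of_eq (Finset.sum_congr rfl fun x hx => ?_)) h2
    rw [if_pos (le_trans (Finset.le_sup hx) hk)]
  rw [Real.dist_eq, abs_sub_comm, abs_of_nonneg (by linarith [hTle k])]
  rw [Real.dist_eq] at hF
  calc (∑' x, g x) - (∑' x, if ℓ x ≤ k then g x else 0) ≤ (∑' x, g x) - ∑ x ∈ F, g x := by
        linarith
    _ ≤ |∑ x ∈ F, g x - ∑' x, g x| := by rw [abs_sub_comm]; exact le_abs_self _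
    _ < ε := hF

lemma aux_pairE {α : Type*} {f ν : α → ℝ} (h : Summable fun x => f x * ν x) :
    pairE f ν = ((∑' x, f x * ν x : ℝ) : EReal) := by
  set g : α → ℝ := fun x => f x * ν x with hgdef
  have hgp : Summable fun x => max (g x) 0 :=
    h.abs.of_nonneg_of_le (fun x => le_max_right _ _)
      (fun x => max_le (le_abs_self _) (abs_nonneg _))
  have hgm : Summable fun x => max (-g x) 0 :=
    h.abs.of_nonneg_of_le (fun x => le_max_right _ _)
      (fun x => max_le (by rw [← abs_neg]; exact le_abs_self _) (abs_nonneg _))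
  have e1 : (∑' x, ENNReal.ofReal (g x)) = ENNReal.ofReal (∑' x, max (g x) 0) := by
    rw [ENNReal.ofReal_tsum_of_nonneg (fun x => le_max_right _ _) hgp]
    refine tsum_congr fun x => ?_
    rcases le_total (g x) 0 with hx | hx
    · rw [max_eq_right hx, ENNReal.ofReal_of_nonpos hx]; simp
    · rw [max_eq_left hx]
  have e2 : (∑' x, ENNReal.ofReal (-g x)) = ENNReal.ofReal (∑' x, max (-g x) 0) := by
    rw [ENNReal.ofReal_tsum_of_nonneg (fun x => le_max_right _ _) hgm]
    refine tsum_congr fun x => ?_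
    rcases le_total (-g x) 0 with hx | hx
    · rw [max_eq_right hx, ENNReal.ofReal_of_nonpos hx]; simp
    · rw [max_eq_left hx]
  have hA : (0:ℝ) ≤ ∑' x, max (g x) 0 := tsum_nonneg fun x => le_max_right _ _
  have hB : (0:ℝ) ≤ ∑' x, max (-g x) 0 := tsum_nonneg fun x => le_max_right _ _
  have hsub : ∑' x, g x = (∑' x, max (g x) 0) - ∑' x, max (-g x) 0 := by
    rw [← Summable.tsum_sub hgp hgm]
    refine tsum_congr fun x => ?_
    rcases le_total (g x) 0 with hx | hx
    · rw [max_eq_right hx, max_eq_left (by linarith)]; ring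
    · rw [max_eq_left hx, max_eq_right (by linarith)]; ring
  rw [pairE, e1, e2, EReal.coe_ennreal_ofReal, EReal.coe_ennreal_ofReal,
    max_eq_left hA, max_eq_left hB, ← EReal.coe_sub, hsub]

lemma aux_pairE_top {α : Type*} {f ν : α → ℝ} (h0 : ∀ x, 0 ≤ f x * ν x)
    (h : ¬ Summable fun x => f x * ν x) : pairE f ν = ⊤ := by
  have h1 : (∑' x, ENNReal.ofReal (f x * ν x)) = ⊤ := by
    by_contra hne
    apply h
    have hsum : Summable fun x => (f x * ν x).toNNReal := by
      rw [← ENNReal.tsum_coe_ne_top_iff_summable]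
      exact hne
    have hco : Summable fun x => ((f x * ν x).toNNReal : ℝ) := NNReal.summable_coe.mpr hsum
    refine hco.congr fun x => Real.coe_toNNReal _ (h0 x)
  have h2 : (∑' x, ENNReal.ofReal (-(f x * ν x))) = 0 := by
    simp only [ENNReal.ofReal_of_nonpos (neg_nonpos.mpr (h0 _))]
    exact tsum_zero
  rw [pairE, h1, h2]
  simp



/-- auxiliary error term `ε_k(a) = log (ν₁(a) ℚ{𝒳_k*|a} / ν₁^{≤k}(a))`. -/
noncomputable def auxEps {𝒳 : Type} (Q : 𝒳 → XStar 𝒳 → ℝ) (ν : (𝒳 × XStar 𝒳) → ℝ)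
    (k : ℕ) (a : 𝒳) : ℝ :=
  Real.log (nu1 ν a * QmassK Q k a / (∑' c : XStar 𝒳, if c.1 ≤ k then ν (a, c) else 0))

/-- auxiliary total error `δ_k = Σ_a |ε_k(a)|`. -/
noncomputable def auxDelta {𝒳 : Type} [Fintype 𝒳] (Q : 𝒳 → XStar 𝒳 → ℝ)
    (ν : (𝒳 × XStar 𝒳) → ℝ) (k : ℕ) : ℝ :=
  ∑ a : 𝒳, |auxEps Q ν k a|

set_option maxHeartbeats 1000000 in
/-- **Lemma 3.6** (limit inequalities). Let `ν ≪ ν₁ ⊗ ℚ`. Then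
(i) `limsup_k ⟨f^{(0,q]}, ν_k⟩ ≤ ⟨f^{(0,q]}, ν⟩`, and
(ii) `limsup_k ⟨f_k, ν_k⟩ ≤ ⟨f^{(0,q]}, ν⟩ + ⟨f^{(q,1]}, ν⟩`. -/
theorem stmt10 {𝒳 : Type} [Fintype 𝒳] [Nonempty 𝒳]
    (Q : 𝒳 → XStar 𝒳 → ℝ) (ν : (𝒳 × XStar 𝒳) → ℝ)
    (hQ : IsKernel Q) (hν : ν ∈ Mstar 𝒳)
    (habs : ∀ p : 𝒳 × XStar 𝒳, prodQ (nu1 ν) Q p = 0 → ν p = 0) :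
    Filter.limsup (fun k : ℕ => pairE (f0q Q ν) (restrictK k ν)) Filter.atTop
        ≤ pairE (f0q Q ν) ν ∧
    Filter.limsup (fun k : ℕ => pairE (fres Q k ν) (restrictK k ν)) Filter.atTop
        ≤ pairE (f0q Q ν) ν + pairE (fq1 Q ν) ν := by
  obtain ⟨hν0, hν1, hνm⟩ := hν
  obtain ⟨hQ0, hQ1⟩ := hQ
  set π : (𝒳 × XStar 𝒳) → ℝ := prodQ (nu1 ν) Q with hπdef
  have hπ0 : ∀ p, 0 ≤ π p := fun p =>
    mul_nonneg (tsum_nonneg fun c => hν0 _) (hQ0 _ _)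
  have hνle1 : ∀ p, ν p ≤ 1 := by
    intro p
    have := Summable.le_tsum hν1.summable p (fun q _ => hν0 q)
    rwa [hν1.tsum_eq] at this
  have hπpos : ∀ p, 0 < ν p → 0 < π p := fun p hp =>
    lt_of_le_of_ne (hπ0 p) fun h => (hp.ne' (habs p h.symm))
  -- sign facts
  have hf0q_nonpos : ∀ p, f0q Q ν p ≤ 0 := by
    intro p
    rw [f0q]
    split
    · rename_i hcond
      exact Real.log_nonpos (div_nonneg (hcond.1.le) (hπ0 p))
        ((div_le_one (hπpos p hcond.1)).mpr hcond.2)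
    · exact le_rfl
  have hfq1_nonneg : ∀ p, 0 ≤ fq1 Q ν p := by
    intro p
    rw [fq1]
    split
    · rename_i hcond
      have hνp : 0 < ν p := lt_of_le_of_lt (hπ0 p) hcond.1
      exact Real.log_nonneg ((one_le_div (hπpos p hνp)).mpr hcond.1.le)
    · exact le_rfl
  -- the domination -(f0q * ν) ≤ π
  have hbound : ∀ p, -(f0q Q ν p * ν p) ≤ π p := by
    intro p
    rw [f0q]
    split
    · rename_i hcond
      obtain ⟨hνp, hle⟩ := hcond
      have hπp : 0 < π p := hπpos p hνp
      have h1 : Real.log (π p / ν p) ≤ π p / ν p - 1 :=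
        Real.log_le_sub_one_of_pos (div_pos hπp hνp)
      have h2 : Real.log (ν p / π p) = Real.log (ν p) - Real.log (π p) :=
        Real.log_div hνp.ne' hπp.ne'
      have h3 : Real.log (π p / ν p) = Real.log (π p) - Real.log (ν p) :=
        Real.log_div hπp.ne' hνp.ne'
      have h4 : π p / ν p * ν p = π p := div_mul_cancel₀ _ hνp.ne'
      nlinarith [mul_le_mul_of_nonneg_right h1 hνp.le]
    · simpa using hπ0 p
  -- summability of π and hence of f0q * ν
  have hπsum : Summable π := by
    refine (summable_prod_of_nonneg (fun p => hπ0 p)).mpr ⟨fun a => ?_, Summable.of_finite⟩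
    have he : (fun c => π (a, c)) = fun c => nu1 ν a * Q a c := rfl
    rw [he]
    exact (hQ1 a).summable.mul_left _
  have hSsum : Summable fun p => -(f0q Q ν p * ν p) := by
    refine hπsum.of_nonneg_of_le (fun p => ?_) hbound
    exact neg_nonneg.mpr (mul_nonpos_iff.mpr (Or.inr ⟨hf0q_nonpos p, hν0 p⟩))
  have hf0qsum : Summable fun p => f0q Q ν p * ν p := by
    have := hSsum.neg; simpa using this
  set t : ℝ := ∑' p, f0q Q ν p * ν p with htdef
  have hpair0 : pairE (f0q Q ν) ν = ((t : ℝ) : EReal) := aux_pairE hf0qsum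
  -- normalisation facts
  have hN_tendsto : Tendsto (fun k => normK k ν) atTop (𝓝 1) := by
    have := aux_tendsto (fun p : 𝒳 × XStar 𝒳 => p.2.1) hν1.summable hν0
    rwa [hν1.tsum_eq] at this
  have hEv : ∀ᶠ k in atTop, 0 < normK k ν := hN_tendsto.eventually (eventually_gt_nhds one_pos)
  have htrunc_sum : ∀ k, Summable fun p : 𝒳 × XStar 𝒳 => if p.2.1 ≤ k then ν p else 0 :=
    fun k => hν1.summable.of_nonneg_of_le (fun p => by split <;> simp [hν0 p])
      (fun p => by split <;> simp [hν0 p])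
  have hN_le1 : ∀ k, normK k ν ≤ 1 := by
    intro k
    have := Summable.tsum_le_tsum (f := fun p : 𝒳 × XStar 𝒳 => if p.2.1 ≤ k then ν p else 0)
      (g := ν) (fun p => by by_cases h : p.2.1 ≤ k <;> simp [h, hν0 p]) (htrunc_sum k)
      hν1.summable
    rwa [hν1.tsum_eq] at this
  -- finite support summability
  have hsupp : ∀ (k : ℕ) (f : (𝒳 × XStar 𝒳) → ℝ),
      Summable fun p => f p * restrictK k ν p := by
    intro k f
    apply summable_of_ne_finset_zero (s := (aux_finite 𝒳 k).toFinset)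
    intro p hp
    have hnk : ¬ p.2.1 ≤ k := by
      intro h; exact hp ((aux_finite 𝒳 k).mem_toFinset.mpr h)
    simp [restrictK, hnk]
  have hres0 : ∀ k p, 0 ≤ restrictK k ν p := by
    intro k p
    rw [restrictK]
    split
    · exact div_nonneg (hν0 p) (tsum_nonneg fun q => by split <;> simp [hν0 q])
    · exact le_rfl
  have hres : ∀ k p, restrictK k ν p = (if p.2.1 ≤ k then ν p else 0) / normK k ν := by
    intro k p; rw [restrictK]; split <;> simp
  -- W k = ∑' f0q * truncated ν, tendsto t
  set W : ℕ → ℝ := fun k => ∑' p, f0q Q ν p * (if p.2.1 ≤ k then ν p else 0) with hWdef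
  have hW_tendsto : Tendsto W atTop (𝓝 t) := by
    have h1 := aux_tendsto (fun p : 𝒳 × XStar 𝒳 => p.2.1) hSsum
      (fun p => neg_nonneg.mpr (mul_nonpos_iff.mpr (Or.inr ⟨hf0q_nonpos p, hν0 p⟩)))
    have h2 : ∀ k : ℕ, (∑' p : 𝒳 × XStar 𝒳, if p.2.1 ≤ k then -(f0q Q ν p * ν p) else 0)
        = - W k := by
      intro k
      rw [hWdef, ← tsum_neg]
      refine tsum_congr fun p => ?_
      split <;> simp
    have h3 : (∑' p, -(f0q Q ν p * ν p)) = -t := by rw [htdef, ← tsum_neg]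
    simp only [h2, h3] at h1
    have := h1.neg
    simpa using this
  have hWsum : ∀ k, Summable fun p => f0q Q ν p * (if p.2.1 ≤ k then ν p else 0) := by
    intro k
    apply summable_of_ne_finset_zero (s := (aux_finite 𝒳 k).toFinset)
    intro p hp
    have hnk : ¬ p.2.1 ≤ k := by
      intro h; exact hp ((aux_finite 𝒳 k).mem_toFinset.mpr h)
    simp [hnk]
  -- A k : the f0q-part of the k-th pairing
  have hA_eq : ∀ k, (∑' p, f0q Q ν p * restrictK k ν p) = W k / normK k ν := by
    intro k
    rw [hWdef, ← tsum_div_const]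
    refine tsum_congr fun p => ?_
    rw [hres, mul_div_assoc]
  have hA_le : ∀ k, 0 < normK k ν → W k / normK k ν ≤ W k := by
    intro k hk
    have hWnp : W k ≤ 0 := tsum_nonpos fun p =>
      mul_nonpos_iff.mpr (Or.inr ⟨hf0q_nonpos p, by split <;> simp [hν0 p]⟩)
    rw [div_le_iff₀ hk]
    calc W k ≤ W k * 1 := by rw [mul_one]
      _ ≤ W k * normK k ν := mul_le_mul_of_nonpos_left (hN_le1 k) hWnp
  -- Part (i)
  have hpart1 : Filter.limsup (fun k : ℕ => pairE (f0q Q ν) (restrictK k ν)) Filter.atTop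
      ≤ pairE (f0q Q ν) ν := by
    have hev : ∀ᶠ k in atTop,
        pairE (f0q Q ν) (restrictK k ν) ≤ ((W k : ℝ) : EReal) := by
      refine hEv.mono fun k hk => ?_
      rw [aux_pairE (hsupp k (f0q Q ν)), hA_eq k]
      exact EReal.coe_le_coe_iff.mpr (hA_le k hk)
    calc limsup (fun k => pairE (f0q Q ν) (restrictK k ν)) atTop
        ≤ limsup (fun k => ((W k : ℝ) : EReal)) atTop := limsup_le_limsup hev
      _ = ((t : ℝ) : EReal) := (EReal.tendsto_coe.mpr hW_tendsto).limsup_eq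
      _ = pairE (f0q Q ν) ν := hpair0.symm
  refine ⟨hpart1, ?_⟩
  -- Part (ii)
  by_cases hP : Summable fun p => fq1 Q ν p * ν p
  case neg =>
    have htop : pairE (fq1 Q ν) ν = ⊤ :=
      aux_pairE_top (fun p => mul_nonneg (hfq1_nonneg p) (hν0 p)) hP
    rw [htop, hpair0]
    have hadd : ((t : ℝ) : EReal) + ⊤ = ⊤ := by
      rw [EReal.add_top_of_ne_bot (EReal.coe_ne_bot t)]
    rw [hadd]
    exact le_top
  case pos =>
  set pbar : ℝ := ∑' p, fq1 Q ν p * ν p with hpbardef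
  have hpair1 : pairE (fq1 Q ν) ν = ((pbar : ℝ) : EReal) := aux_pairE hP
  have hνa_sum : ∀ a : 𝒳, Summable fun c : XStar 𝒳 => ν (a, c) :=
    fun a => hν1.summable.prod_factor a
  have htruncνa_sum : ∀ (a : 𝒳) (k : ℕ),
      Summable fun c : XStar 𝒳 => if c.1 ≤ k then ν (a, c) else 0 := fun a k =>
    (hνa_sum a).of_nonneg_of_le
      (fun c => by by_cases h : c.1 ≤ k <;> simp [h, hν0 (a, c)])
      (fun c => by by_cases h : c.1 ≤ k <;> simp [h, hν0 (a, c)])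
  -- δ tends to 0
  have hδ_tendsto : Tendsto (auxDelta Q ν) atTop (𝓝 0) := by
    have hper : ∀ a : 𝒳, Tendsto (fun k => |auxEps Q ν k a|) atTop (𝓝 0) := by
      intro a
      by_cases ha : nu1 ν a = 0
      · have hKa : ∀ k : ℕ, (∑' c : XStar 𝒳, if c.1 ≤ k then ν (a, c) else 0) = 0 := by
          intro k
          have hle : (∑' c : XStar 𝒳, if c.1 ≤ k then ν (a, c) else 0)
              ≤ ∑' c : XStar 𝒳, ν (a, c) :=
            Summable.tsum_le_tsum (fun c => by by_cases h : c.1 ≤ k <;> simp [h, hν0 (a, c)])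
              (htruncνa_sum a k) (hνa_sum a)
          have hge : (0:ℝ) ≤ ∑' c : XStar 𝒳, if c.1 ≤ k then ν (a, c) else 0 :=
            tsum_nonneg fun c => by by_cases h : c.1 ≤ k <;> simp [h, hν0 (a, c)]
          have hnua : (∑' c : XStar 𝒳, ν (a, c)) = 0 := ha
          linarith
        have hz : ∀ k : ℕ, |auxEps Q ν k a| = 0 := by
          intro k
          rw [auxEps, hKa k]
          simp
        simpa [hz] using (tendsto_const_nhds : Tendsto (fun _ : ℕ => (0:ℝ)) atTop (𝓝 0))
      · have h1 : Tendsto (fun k => QmassK Q k a) atTop (𝓝 1) := by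
          have := aux_tendsto (fun c : XStar 𝒳 => c.1) (hQ1 a).summable (hQ0 a)
          rw [(hQ1 a).tsum_eq] at this
          exact this
        have h2 : Tendsto (fun k => ∑' c : XStar 𝒳, if c.1 ≤ k then ν (a, c) else 0)
            atTop (𝓝 (nu1 ν a)) :=
          aux_tendsto (fun c : XStar 𝒳 => c.1) (hνa_sum a) (fun c => hν0 (a, c))
        have h3 : Tendsto (fun k => nu1 ν a * QmassK Q k a /
            (∑' c : XStar 𝒳, if c.1 ≤ k then ν (a, c) else 0)) atTop
            (𝓝 (nu1 ν a * 1 / nu1 ν a)) :=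
          (tendsto_const_nhds.mul h1).div h2 ha
        have h4 : nu1 ν a * 1 / nu1 ν a = 1 := by field_simp
        rw [h4] at h3
        have h5 : Tendsto (fun k => auxEps Q ν k a) atTop (𝓝 0) := by
          have := (Real.continuousAt_log one_ne_zero).tendsto.comp h3
          simpa [auxEps, Real.log_one, Function.comp_def] using this
        simpa using h5.abs
    have := tendsto_finset_sum (Finset.univ : Finset 𝒳) (fun a _ => hper a)
    rw [Finset.sum_const_zero] at this; exact this
  -- V bound
  have hV_le : ∀ k, (∑' p, fq1 Q ν p * (if p.2.1 ≤ k then ν p else 0)) ≤ pbar := by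
    intro k
    refine Summable.tsum_le_tsum (fun p => ?_) ?_ hP
    · by_cases h : p.2.1 ≤ k
      · simp [h]
      · simp [h, mul_nonneg (hfq1_nonneg p) (hν0 p)]
    · apply summable_of_ne_finset_zero (s := (aux_finite 𝒳 k).toFinset)
      intro p hp
      have hnk : ¬ p.2.1 ≤ k := fun h => hp ((aux_finite 𝒳 k).mem_toFinset.mpr h)
      simp [hnk]
  -- the key eventual bound
  have hkey : ∀ k, 0 < normK k ν →
      (∑' p, fres Q k ν p * restrictK k ν p)
        ≤ W k + pbar / normK k ν + auxDelta Q ν k := by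
    intro k hk
    have hpt : ∀ p, fres Q k ν p * restrictK k ν p
        = (f0q Q ν p + fq1 Q ν p + auxEps Q ν k p.1) * restrictK k ν p := by
      intro p
      by_cases hr : 0 < restrictK k ν p
      case neg =>
        have hr0 : restrictK k ν p = 0 := le_antisymm (not_lt.mp hr) (hres0 k p)
        rw [hr0, mul_zero, mul_zero]
      case pos =>
      have hnk : p.2.1 ≤ k := by
        by_contra h
        rw [hres k p, if_neg h, zero_div] at hr
        exact lt_irrefl 0 hr
      have hrr : 0 < ν p / normK k ν := by rwa [hres k p, if_pos hnk] at hr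
      have hνp : 0 < ν p := by
        rcases div_pos_iff.mp hrr with ⟨h, _⟩ | ⟨_, h⟩
        · exact h
        · linarith
      have hπp : 0 < π p := hπpos p hνp
      have hπp' : 0 < nu1 ν p.1 * Q p.1 p.2 := hπp
      have hnua0 : (0:ℝ) ≤ nu1 ν p.1 := tsum_nonneg fun c => hν0 (p.1, c)
      have hQa : 0 < Q p.1 p.2 := by
        rcases mul_pos_iff.mp hπp' with ⟨_, h⟩ | ⟨h, _⟩
        · exact h
        · exact absurd h (not_lt.mpr hnua0)
      have hnua : 0 < nu1 ν p.1 := by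
        rcases mul_pos_iff.mp hπp' with ⟨h, _⟩ | ⟨h, _⟩
        · exact h
        · exact absurd h (not_lt.mpr hnua0)
      have hQtrunc_sum : Summable fun c : XStar 𝒳 => if c.1 ≤ k then Q p.1 c else 0 :=
        (hQ1 p.1).summable.of_nonneg_of_le
          (fun c => by by_cases h : c.1 ≤ k <;> simp [h, hQ0 p.1 c])
          (fun c => by by_cases h : c.1 ≤ k <;> simp [h, hQ0 p.1 c])
      have hQk : 0 < QmassK Q k p.1 := by
        have hle := Summable.le_tsum hQtrunc_sum p.2
          (fun c _ => by by_cases h : c.1 ≤ k <;> simp [h, hQ0 p.1 c])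
        rw [if_pos hnk] at hle
        exact lt_of_lt_of_le hQa hle
      have hnuKp : 0 < ∑' c : XStar 𝒳, if c.1 ≤ k then ν (p.1, c) else 0 := by
        have hle := Summable.le_tsum (htruncνa_sum p.1 k) p.2
          (fun c _ => by by_cases h : c.1 ≤ k <;> simp [h, hν0 (p.1, c)])
        rw [if_pos hnk] at hle
        exact lt_of_lt_of_le hνp hle
      have hnu1res : nu1 (restrictK k ν) p.1
          = (∑' c : XStar 𝒳, if c.1 ≤ k then ν (p.1, c) else 0) / normK k ν := by
        show (∑' c : XStar 𝒳, restrictK k ν (p.1, c)) = _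
        rw [← tsum_div_const]
        refine tsum_congr fun c => ?_
        exact hres k (p.1, c)
      have hf01 : f0q Q ν p + fq1 Q ν p = Real.log (ν p / π p) := by
        by_cases hle : ν p ≤ π p
        · rw [f0q, if_pos ⟨hνp, hle⟩, fq1,
            if_neg (fun hc => absurd hc.1 (not_lt.mpr hle)), add_zero]
        · rw [f0q, if_neg (fun hc => hle hc.2), fq1,
            if_pos ⟨not_le.mp hle, hνle1 p⟩, zero_add]
      have hQc : Qcond Q k p.1 p.2 = Q p.1 p.2 / QmassK Q k p.1 := by
        rw [Qcond]
        simp [hnk]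
      have hprodres : prodQ (nu1 (restrictK k ν)) (Qcond Q k) p
          = ((∑' c : XStar 𝒳, if c.1 ≤ k then ν (p.1, c) else 0) / normK k ν)
            * (Q p.1 p.2 / QmassK Q k p.1) := by
        rw [prodQ, hnu1res, hQc]
      have harg : restrictK k ν p / prodQ (nu1 (restrictK k ν)) (Qcond Q k) p
          = (ν p / π p) * (nu1 ν p.1 * QmassK Q k p.1
              / (∑' c : XStar 𝒳, if c.1 ≤ k then ν (p.1, c) else 0)) := by
        rw [hres k p, if_pos hnk, hprodres, hπdef, prodQ]
        field_simp
      have hfres : fres Q k ν p = f0q Q ν p + fq1 Q ν p + auxEps Q ν k p.1 := by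
        rw [fres, if_pos hr, harg,
          Real.log_mul (div_pos hνp hπp).ne'
            (div_pos (mul_pos hnua hQk) hnuKp).ne', hf01, auxEps]
      rw [hfres]
    have hdecomp : (∑' p, fres Q k ν p * restrictK k ν p)
        = (∑' p, f0q Q ν p * restrictK k ν p) + (∑' p, fq1 Q ν p * restrictK k ν p)
          + (∑' p, auxEps Q ν k p.1 * restrictK k ν p) := by
      rw [show (fun p => fres Q k ν p * restrictK k ν p)
          = fun p => f0q Q ν p * restrictK k ν p + fq1 Q ν p * restrictK k ν p
            + auxEps Q ν k p.1 * restrictK k ν p from funext fun p => by rw [hpt p]; ring,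
        Summable.tsum_add ((hsupp k (f0q Q ν)).add (hsupp k (fq1 Q ν)))
          (hsupp k fun p => auxEps Q ν k p.1),
        Summable.tsum_add (hsupp k (f0q Q ν)) (hsupp k (fq1 Q ν))]
    have hA : (∑' p, f0q Q ν p * restrictK k ν p) ≤ W k := by
      rw [hA_eq k]; exact hA_le k hk
    have hB : (∑' p, fq1 Q ν p * restrictK k ν p) ≤ pbar / normK k ν := by
      have hB1 : (∑' p, fq1 Q ν p * restrictK k ν p)
          = (∑' p, fq1 Q ν p * (if p.2.1 ≤ k then ν p else 0)) / normK k ν := by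
        rw [← tsum_div_const]
        exact tsum_congr fun p => by rw [hres, mul_div_assoc]
      rw [hB1]
      exact (div_le_div_iff_of_pos_right hk).mpr (hV_le k)
    have hE : (∑' p, auxEps Q ν k p.1 * restrictK k ν p) ≤ auxDelta Q ν k := by
      have h1 : ∀ p : 𝒳 × XStar 𝒳, auxEps Q ν k p.1 * restrictK k ν p
          ≤ auxDelta Q ν k * restrictK k ν p := fun p =>
        mul_le_mul_of_nonneg_right
          (le_trans (le_abs_self _)
            (Finset.single_le_sum (f := fun a => |auxEps Q ν k a|)
              (fun a _ => abs_nonneg _) (Finset.mem_univ p.1)))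
          (hres0 k p)
      have h2 := Summable.tsum_le_tsum h1 (hsupp k fun p => auxEps Q ν k p.1)
        (hsupp k fun _ => auxDelta Q ν k)
      have h4 : (∑' p, restrictK k ν p) = 1 := by
        have h5 : (∑' p, restrictK k ν p)
            = (∑' p : 𝒳 × XStar 𝒳, if p.2.1 ≤ k then ν p else 0) / normK k ν := by
          rw [← tsum_div_const]
          exact tsum_congr fun p => hres k p
        rw [h5]
        exact div_self hk.ne'
      have h3 : (∑' p, auxDelta Q ν k * restrictK k ν p) = auxDelta Q ν k := by
        rw [tsum_mul_left, h4, mul_one]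
      calc (∑' p, auxEps Q ν k p.1 * restrictK k ν p)
          ≤ ∑' p, auxDelta Q ν k * restrictK k ν p := h2
        _ = auxDelta Q ν k := h3
    rw [hdecomp]
    exact add_le_add (add_le_add hA hB) hE
  -- conclusion
  have hev2 : ∀ᶠ k in atTop, pairE (fres Q k ν) (restrictK k ν)
      ≤ (((W k + pbar / normK k ν + auxDelta Q ν k : ℝ)) : EReal) := by
    refine hEv.mono fun k hk => ?_
    rw [aux_pairE (hsupp k (fres Q k ν))]
    exact EReal.coe_le_coe_iff.mpr (hkey k hk)
  have hR_tendsto : Tendsto (fun k => W k + pbar / normK k ν + auxDelta Q ν k)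
      atTop (𝓝 (t + pbar)) := by
    have h1 : Tendsto (fun k => pbar / normK k ν) atTop (𝓝 pbar) := by
      have := (tendsto_const_nhds (x := pbar)).div hN_tendsto one_ne_zero
      rw [div_one] at this; exact this
    have := (hW_tendsto.add h1).add hδ_tendsto
    simpa using this
  calc limsup (fun k => pairE (fres Q k ν) (restrictK k ν)) atTop
      ≤ limsup (fun k => (((W k + pbar / normK k ν + auxDelta Q ν k : ℝ)) : EReal)) atTop :=
        limsup_le_limsup hev2
    _ = (((t + pbar : ℝ)) : EReal) := (EReal.tendsto_coe.mpr hR_tendsto).limsup_eq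
    _ = pairE (f0q Q ν) ν + pairE (fq1 Q ν) ν := by
        rw [hpair0, hpair1, ← EReal.coe_add]

end GWLD
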